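/- The weak dual of a 2-connected outerplanar graph (with respect to any outerplanar embedding) is a tree. -/

import Mathlib

open SimpleGraph

section ZF
variable {V : Type*}

/-- One round of the zero forcing color change rule applied to the blue set `S`. -/
def forceStep (G : SimpleGraph V) (S : Set V) : Set V :=
  S ∪ {w | ∃ u ∈ S, G.Adj u w ∧ ∀ x, G.Adj u x → x ∉ S → x = w}

/-- `S` is a zero forcing set: repeatedly applying the color change rule turns all
vertices blue; equivalently every forcing-closed superset of `S` is everything. -/
def IsZeroForcingSet (G : SimpleGraph V) (S : Set V) : Prop :=
  ∀ T : Set V, S ⊆ T → forceStep G T ⊆ T → T = Set.univ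

/-- The zero forcing number `Z(G)`. -/
noncomputable def zeroForcingNumber (G : SimpleGraph V) [Fintype V] : ℕ :=
  sInf {n | ∃ S : Finset V, S.card = n ∧ IsZeroForcingSet G ↑S}

/-- The list `l` enumerates an induced path of `G` (a single vertex counts). -/
def IsListPath (G : SimpleGraph V) (l : List V) : Prop :=
  l.Nodup ∧ ∀ i j : Fin l.length,
    (G.Adj (l.get i) (l.get j) ↔ (i.val + 1 = j.val ∨ j.val + 1 = i.val))

/-- The set `P` induces a path in `G`. -/
def IsInducedPathSet (G : SimpleGraph V) (P : Set V) : Prop :=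
  ∃ l : List V, IsListPath G l ∧ {v | v ∈ l} = P

/-- The path cover number `P(G)`: the minimum number of parts in a partition of the
vertex set into sets each inducing a path. -/
noncomputable def pathCoverNumber (G : SimpleGraph V) [Fintype V] [DecidableEq V] : ℕ :=
  sInf {n | ∃ P : Finpartition (Finset.univ : Finset V),
    P.parts.card = n ∧ ∀ p ∈ P.parts, IsInducedPathSet G ↑p}

/-- `G` is 2-connected: at least 3 vertices, connected, and deleting any vertex
leaves a connected graph. -/
def IsTwoConnected (G : SimpleGraph V) [Fintype V] : Prop :=
  3 ≤ Fintype.card V ∧ G.Connected ∧ ∀ v : V, (G.induce {w : V | w ≠ v}).Connected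

/-- `σ` places the vertices of `G` on a circle (in the order given by `Fin`) so that no
two edges, drawn as chords, cross; this witnesses outerplanarity of `G`. -/
def IsOuterplanarEmbedding (G : SimpleGraph V) [Fintype V]
    (σ : V ≃ Fin (Fintype.card V)) : Prop :=
  ∀ a b c d : V, G.Adj a b → G.Adj c d →
    ¬(σ a < σ c ∧ σ c < σ b ∧ σ b < σ d)

/-- A graph is outerplanar iff its vertices can be placed on a circle with all
edges drawn as pairwise non-crossing chords. -/
def IsOuterplanar (G : SimpleGraph V) [Fintype V] : Prop :=
  ∃ σ : V ≃ Fin (Fintype.card V), IsOuterplanarEmbedding G σ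

/-- `v` is the cyclic successor of `u` among the elements of `F`, with respect to the
circular order induced by `σ`. -/
def nextIn {n : ℕ} (σ : V ≃ Fin n) (F : Finset V) (u v : V) : Prop :=
  u ∈ F ∧ v ∈ F ∧ u ≠ v ∧
    ((σ u < σ v ∧ ∀ w ∈ F, σ u < σ w → σ v ≤ σ w) ∨
     ((∀ w ∈ F, σ w ≤ σ u) ∧ (∀ w ∈ F, σ v ≤ σ w)))

/-- `F` is (the vertex set of) a bounded face of the outerplanar embedding `σ` of the
2-connected outerplanar graph `G`: in the circular order, consecutive members of `F`
are exactly the adjacent pairs inside `F` (so `F` spans a chordless polygon). -/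
def IsFace (G : SimpleGraph V) [Fintype V] (σ : V ≃ Fin (Fintype.card V))
    (F : Finset V) : Prop :=
  3 ≤ F.card ∧ ∀ u ∈ F, ∀ v ∈ F,
    (G.Adj u v ↔ (nextIn σ F u v ∨ nextIn σ F v u))

/-- The weak dual of the embedded outerplanar graph `G`: vertices are the bounded
faces, two faces being adjacent iff they share an edge of `G`. -/
def weakDual (G : SimpleGraph V) [Fintype V] (σ : V ≃ Fin (Fintype.card V)) :
    SimpleGraph {F : Finset V // IsFace G σ F} where
  Adj F₁ F₂ := F₁ ≠ F₂ ∧ ∃ u v, G.Adj u v ∧ u ∈ F₁.1 ∧ u ∈ F₂.1 ∧ v ∈ F₁.1 ∧ v ∈ F₂.1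
  symm := by
    refine ⟨?_⟩
    rintro F₁ F₂ ⟨hne, u, v, ha, h1, h2, h3, h4⟩
    exact ⟨hne.symm, u, v, ha, h2, h1, h4, h3⟩
  loopless := by refine ⟨?_⟩; rintro F ⟨hne, -⟩; exact hne rfl

/-- The degree of a face in the weak dual. -/
noncomputable def dualDeg (G : SimpleGraph V) [Fintype V]
    (σ : V ≃ Fin (Fintype.card V)) (F : {F : Finset V // IsFace G σ F}) : ℕ :=
  ((weakDual G σ).neighborSet F).ncard

/-- A leaf face: a face which is a leaf of the weak dual tree. -/
def IsLeafFace (G : SimpleGraph V) [Fintype V] (σ : V ≃ Fin (Fintype.card V))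
    (F : {F : Finset V // IsFace G σ F}) : Prop :=
  dualDeg G σ F = 1

/-- `n_ℓ`: the number of leaves of the weak dual. -/
noncomputable def numDualLeaves (G : SimpleGraph V) [Fintype V]
    (σ : V ≃ Fin (Fintype.card V)) : ℕ :=
  Nat.card {F : {F : Finset V // IsFace G σ F} // IsLeafFace G σ F}

end ZF

section FT
variable {V : Type*} [Fintype V]

/-- Branch faces: faces of weak-dual degree 2 that are adjacent to a leaf face or to
another branch face. -/
inductive IsBranchFace (G : SimpleGraph V) (σ : V ≃ Fin (Fintype.card V)) :
    {F : Finset V // IsFace G σ F} → Prop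
  | leaf (F F' : {F : Finset V // IsFace G σ F}) :
      dualDeg G σ F = 2 → (weakDual G σ).Adj F F' → IsLeafFace G σ F' →
      IsBranchFace G σ F
  | branch (F F' : {F : Finset V // IsFace G σ F}) :
      dualDeg G σ F = 2 → (weakDual G σ).Adj F F' → IsBranchFace G σ F' →
      IsBranchFace G σ F

/-- Limb faces: faces of weak-dual degree at least 3 adjacent to a leaf or branch face. -/
def IsLimbFace (G : SimpleGraph V) (σ : V ≃ Fin (Fintype.card V))
    (F : {F : Finset V // IsFace G σ F}) : Prop :=
  3 ≤ dualDeg G σ F ∧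
    ∃ F', (weakDual G σ).Adj F F' ∧ (IsLeafFace G σ F' ∨ IsBranchFace G σ F')

/-- Trunk faces: faces of weak-dual degree at least 2 that are adjacent to no leaf
face and no branch face. -/
def IsTrunkFace (G : SimpleGraph V) (σ : V ≃ Fin (Fintype.card V))
    (F : {F : Finset V // IsFace G σ F}) : Prop :=
  2 ≤ dualDeg G σ F ∧
    ∀ F', (weakDual G σ).Adj F F' → ¬(IsLeafFace G σ F' ∨ IsBranchFace G σ F')

/-- The vertices of the foliage of `G`: vertices lying on a leaf, branch, or limb face. -/
def foliageSet (G : SimpleGraph V) (σ : V ≃ Fin (Fintype.card V)) : Set V :=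
  {v | ∃ F : {F : Finset V // IsFace G σ F},
    (IsLeafFace G σ F ∨ IsBranchFace G σ F ∨ IsLimbFace G σ F) ∧ v ∈ F.1}

/-- The vertices of the trunk of `G`: vertices lying on a trunk face. -/
def trunkSet (G : SimpleGraph V) (σ : V ≃ Fin (Fintype.card V)) : Set V :=
  {v | ∃ F : {F : Finset V // IsFace G σ F}, IsTrunkFace G σ F ∧ v ∈ F.1}

/-- Boundary vertices: vertices in both the foliage and the trunk. -/
def boundarySet (G : SimpleGraph V) (σ : V ≃ Fin (Fintype.card V)) : Set V :=
  foliageSet G σ ∩ trunkSet G σ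

end FT


section WDProof
set_option linter.unusedSectionVars false
set_option linter.unusedVariables false
set_option maxHeartbeats 1000000
namespace WD
variable {V : Type*} [Fintype V] {G : SimpleGraph V} {σ : V ≃ Fin (Fintype.card V)}

lemma cross (hσ : IsOuterplanarEmbedding G σ) {a b c d : V} (hab : G.Adj a b)
    (hcd : G.Adj c d) (h1 : σ a < σ c) (h2 : σ c < σ b) (h3 : σ b < σ d) : False :=
  hσ a b c d hab hcd ⟨h1, h2, h3⟩

lemma interiorEdge (hσ : IsOuterplanarEmbedding G σ) {a b c d : V} (hab : G.Adj a b)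
    (hcd : G.Adj c d) (h1 : σ a < σ c) (h2 : σ c < σ b)
    (h3 : σ d < σ a ∨ σ b < σ d) : False := by
  rcases h3 with h3 | h3
  · exact cross hσ hcd.symm hab h3 h1 h2
  · exact cross hσ hab hcd h1 h2 h3

lemma exists_cross {s t : V} (S : Set V) (Q : V → Prop) (W : G.Walk s t)
    (hS : ∀ z ∈ W.support, z ∈ S) (hs : Q s) (ht : ¬ Q t) :
    ∃ c d, G.Adj c d ∧ c ∈ S ∧ d ∈ S ∧ Q c ∧ ¬ Q d ∧
      ∃ W' : G.Walk s c, ∀ z ∈ W'.support, z ∈ S ∧ Q z := by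
  induction W with
  | nil => exact absurd hs ht
  | @cons u v w h p ih =>
    by_cases hQ : Q v
    · obtain ⟨c, d, hcd, hcS, hdS, hQc, hQd, W', hW'⟩ :=
        ih (fun z hz => hS z (by simp [hz])) hQ ht
      refine ⟨c, d, hcd, hcS, hdS, hQc, hQd, .cons h W', ?_⟩
      intro z hz
      rw [SimpleGraph.Walk.support_cons, List.mem_cons] at hz
      rcases hz with rfl | hz
      · exact ⟨hS z (by simp), hs⟩
      · exact hW' z hz
    · exact ⟨u, v, h, hS u (by simp), hS v (by simp), hs, hQ, .nil,
        by intro z hz; simp only [SimpleGraph.Walk.support_nil, List.mem_singleton] at hz;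
           exact hz ▸ ⟨hS u (by simp), hs⟩⟩

lemma walk_avoiding (h : (G.induce {w | w ≠ a}).Connected) {u v : V}
    (hu : u ≠ a) (hv : v ≠ a) : ∃ W : G.Walk u v, ∀ z ∈ W.support, z ≠ a := by
  obtain ⟨W₀⟩ := h.preconnected ⟨u, hu⟩ ⟨v, hv⟩
  refine ⟨W₀.map (SimpleGraph.Embedding.induce {w | w ≠ a}).toHom, ?_⟩
  intro z hz
  replace hz : z ∈ (W₀.map (SimpleGraph.Embedding.induce {w | w ≠ a}).toHom).support := hz
  rw [SimpleGraph.Walk.support_map, List.mem_map] at hz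
  obtain ⟨⟨z', hz'⟩, _, rfl⟩ := hz
  exact hz'

lemma walk_conn (h : G.Connected) (u v : V) : ∃ W : G.Walk u v, True :=
  ⟨(h.preconnected u v).some, trivial⟩

lemma ham (hσ : IsOuterplanarEmbedding G σ) (hconn : G.Connected)
    (h2c : ∀ v : V, (G.induce {w : V | w ≠ v}).Connected)
    {u v : V} (huv : (σ v : ℕ) = (σ u : ℕ) + 1) : G.Adj u v := by
  classical
  let P : Finset (V × V) := Finset.univ.filter
    (fun p => G.Adj p.1 p.2 ∧ σ p.1 ≤ σ u ∧ σ u < σ p.2)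
  have hPmem : ∀ p : V × V, p ∈ P ↔ (G.Adj p.1 p.2 ∧ σ p.1 ≤ σ u ∧ σ u < σ p.2) := by
    intro p; simp [P]
  have hvu : σ u < σ v := by rw [Fin.lt_def]; omega
  have hPne : P.Nonempty := by
    obtain ⟨W, -⟩ := walk_conn hconn u v
    obtain ⟨c, d, hcd, -, -, hQc, hQd, -⟩ := exists_cross Set.univ (fun z => σ z ≤ σ u) W
      (by simp) le_rfl (by intro hcon; rw [Fin.le_def] at hcon; omega)
    exact ⟨(c, d), (hPmem _).mpr ⟨hcd, hQc, not_le.mp hQd⟩⟩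
  obtain ⟨⟨a, b⟩, habP, hmax⟩ := P.exists_max_image
    (fun p => (σ p.1 : ℕ) * Fintype.card V + (Fintype.card V - (σ p.2 : ℕ))) hPne
  rw [hPmem] at habP
  obtain ⟨hab, ha_le, hb_gt⟩ := habP
  dsimp only at hab ha_le hb_gt hmax
  have hmax1 : ∀ c d : V, G.Adj c d → σ c ≤ σ u → σ u < σ d → σ c ≤ σ a := by
    intro c d h1 h2 h3
    have hle := hmax (c, d) ((hPmem _).mpr ⟨h1, h2, h3⟩)
    dsimp only at hle
    rw [Fin.le_def]
    by_contra hcon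
    push_neg at hcon
    have h5 : ((σ a : ℕ) + 1) * Fintype.card V ≤ (σ c : ℕ) * Fintype.card V :=
      Nat.mul_le_mul_right _ hcon
    have h6 : ((σ a : ℕ) + 1) * Fintype.card V = (σ a : ℕ) * Fintype.card V + Fintype.card V := by
      ring
    have hb : (σ b : ℕ) < Fintype.card V := (σ b).isLt
    have hbgt : (σ u : ℕ) < (σ b : ℕ) := hb_gt
    omega
  rcases lt_or_eq_of_le ha_le with hlt | heq
  · -- σ a < σ u : contradiction
    exfalso
    have hau : a ≠ u := fun h => absurd (h ▸ hlt) (lt_irrefl _)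
    have hav : a ≠ v := fun h => by
      rw [Fin.lt_def] at hlt; rw [h] at hlt; omega
    obtain ⟨W, hW⟩ := walk_avoiding (h2c a) hau.symm hav.symm
    obtain ⟨c, d, hcd, hcS, hdS, hQc, hQd, W', hW'⟩ :=
      exists_cross {z | z ≠ a} (fun z => σ z ≤ σ u) W (fun z hz => hW z hz) le_rfl
        (by intro hcon; rw [Fin.le_def] at hcon; omega)
    have hdgt : σ u < σ d := not_le.mp hQd
    have hac : σ a < σ c := by
      by_contra hcon
      have hca : σ c < σ a :=
        lt_of_le_of_ne (not_lt.mp hcon) (fun h => hcS (σ.injective h))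
      obtain ⟨e, f, hef, heS, hfS, hQe, hQf, -, -⟩ :=
        exists_cross {z | z ∈ W'.support} (fun z => σ a < σ z) W' (fun z hz => hz)
          hlt (not_lt.mpr hca.le)
      have he2 := hW' e heS
      have hf2 := hW' f hfS
      have hfa : σ f < σ a :=
        lt_of_le_of_ne (not_lt.mp hQf) (fun h => hf2.1 (σ.injective h))
      exact interiorEdge hσ hab hef hQe (lt_of_le_of_lt he2.2 hb_gt) (Or.inl hfa)
    exact absurd (hmax1 c d hcd hQc hdgt) (not_le.mpr hac)
  · -- σ a = σ u
    have hau : a = u := σ.injective heq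
    have hab' : G.Adj u b := hau ▸ hab
    by_cases hbv : b = v
    · exact hbv ▸ hab'
    · exfalso
      have hbne : (σ b : ℕ) ≠ (σ v : ℕ) := fun h => hbv (σ.injective (Fin.ext h))
      have hbv' : σ v < σ b := by
        rw [Fin.lt_def]
        have : (σ u : ℕ) < (σ b : ℕ) := hb_gt
        omega
      have hub : u ≠ b := hab'.ne
      have hvb : v ≠ b := fun h => hbv h.symm
      obtain ⟨W, hW⟩ := walk_avoiding (h2c b) hvb hub
      obtain ⟨c, d, hcd, hcS, hdS, hQc, hQd, W', hW'⟩ :=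
        exists_cross {z | z ≠ b} (fun z => σ u < σ z) W (fun z hz => hW z hz) hvu
          (lt_irrefl _)
      have hdu : σ d ≤ σ u := not_lt.mp hQd
      have hcb : σ c < σ b := by
        by_contra hcon
        have h1 : σ b < σ c :=
          lt_of_le_of_ne (not_lt.mp hcon) (fun h => hcS (σ.injective h.symm))
        obtain ⟨e, f, hef, heS, hfS, hQe, hQf, -, -⟩ :=
          exists_cross {z | z ∈ W'.support} (fun z => σ z < σ b) W' (fun z hz => hz)
            hbv' (not_lt.mpr h1.le)
        have he2 := hW' e heS
        have hf2 := hW' f hfS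
        have hfb : σ b < σ f :=
          lt_of_le_of_ne (not_lt.mp hQf) (fun h => hf2.1 (σ.injective h.symm))
        exact interiorEdge hσ hab' hef he2.2 hQe (Or.inr hfb)
      rcases lt_or_eq_of_le hdu with hdu' | hdu'
      · exact interiorEdge hσ hab' hcd hQc hcb (Or.inl hdu')
      · have hdeq : d = u := σ.injective hdu'
        have hd : G.Adj u c := hdeq ▸ hcd.symm
        have hle := hmax (u, c) ((hPmem _).mpr ⟨hd, le_rfl, hQc⟩)
        dsimp only at hle
        have h1 : (σ c : ℕ) < (σ b : ℕ) := hcb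
        have h4 : (σ a : ℕ) = (σ u : ℕ) := congrArg Fin.val heq
        rw [h4] at hle
        have h2 : (σ c : ℕ) < Fintype.card V := (σ c).isLt
        have h3 : (σ b : ℕ) < Fintype.card V := (σ b).isLt
        omega

lemma hamWrap (hσ : IsOuterplanarEmbedding G σ) (hconn : G.Connected)
    (h2c : ∀ v : V, (G.induce {w : V | w ≠ v}).Connected) (hcard : 3 ≤ Fintype.card V)
    {u v : V} (hu : (σ u : ℕ) = 0) (hv : (σ v : ℕ) = Fintype.card V - 1) : G.Adj u v := by
  classical
  have huv : u ≠ v := fun h => by rw [h, hv] at hu; omega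
  have hNne : ∃ z, G.Adj u z := by
    obtain ⟨W, -⟩ := walk_conn hconn u v
    obtain ⟨c, d, hcd, -, -, hQc, hQd, -⟩ := exists_cross Set.univ (fun z => z = u) W
      (by simp) rfl (fun h => huv h.symm)
    exact ⟨d, hQc ▸ hcd⟩
  obtain ⟨b, hbN, hbmax⟩ := Finset.exists_max_image
    (Finset.univ.filter (fun z => G.Adj u z)) (fun z => σ z)
    (by obtain ⟨z, hz⟩ := hNne; exact ⟨z, by simp [hz]⟩)
  have hub : G.Adj u b := by simpa using hbN
  by_cases hbv : b = v
  · exact hbv ▸ hub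
  · exfalso
    have hbu : (σ b : ℕ) ≠ 0 := fun h => hub.ne' (σ.injective (Fin.ext (by rw [h, hu])))
    have hbv' : σ b < σ v := by
      rw [Fin.lt_def, hv]
      have h1 : (σ b : ℕ) < Fintype.card V := (σ b).isLt
      have h2 : (σ b : ℕ) ≠ (σ v : ℕ) := fun h => hbv (σ.injective (Fin.ext h))
      omega
    obtain ⟨W, hW⟩ := walk_avoiding (h2c b) (fun h => hbv h.symm) hub.ne
    obtain ⟨c, d, hcd, hcS, hdS, hQc, hQd, -, -⟩ :=
      exists_cross {z | z ≠ b} (fun z => σ b < σ z) W (fun z hz => hW z hz) hbv'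
        (by intro hcon; rw [Fin.lt_def, hu] at hcon; omega)
    have hdb : σ d < σ b :=
      lt_of_le_of_ne (not_lt.mp hQd) (fun h => hdS (σ.injective h))
    rcases Nat.eq_zero_or_pos (σ d : ℕ) with h0 | h0
    · have hd : d = u := σ.injective (Fin.ext (by rw [h0, hu]))
      subst hd
      have := hbmax c (by simp [hcd.symm])
      exact absurd hQc (not_lt.mpr this)
    · have hud : σ u < σ d := by rw [Fin.lt_def, hu]; omega
      exact interiorEdge hσ hub hcd.symm hud hdb (Or.inr hQc)

/-- `w` is strictly under some chord of the region bounded by the edge `x y`. -/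
def Covered (G : SimpleGraph V) (σ : V ≃ Fin (Fintype.card V)) (x y w : V) : Prop :=
  ∃ c d, G.Adj c d ∧ σ x ≤ σ c ∧ σ c < σ w ∧ σ w < σ d ∧ σ d ≤ σ y ∧
    ¬(σ c = σ x ∧ σ d = σ y)

lemma exists_uncovered (hσ : IsOuterplanarEmbedding G σ) {x y w0 : V} (hxy : G.Adj x y)
    (hlt : σ x < σ y) (h1 : σ x < σ w0) (h2 : σ w0 < σ y) :
    ∃ w, σ x < σ w ∧ σ w < σ y ∧ ¬ Covered G σ x y w := by
  classical
  set C : Finset (V × V) := Finset.univ.filter (fun p => G.Adj p.1 p.2 ∧ σ x ≤ σ p.1 ∧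
    σ p.1 < σ p.2 ∧ σ p.2 ≤ σ y ∧ ¬(σ p.1 = σ x ∧ σ p.2 = σ y)) with hC0
  have hCmem : ∀ p : V × V, p ∈ C ↔ (G.Adj p.1 p.2 ∧ σ x ≤ σ p.1 ∧
      σ p.1 < σ p.2 ∧ σ p.2 ≤ σ y ∧ ¬(σ p.1 = σ x ∧ σ p.2 = σ y)) := by
    intro p; simp [hC0]
  by_cases hC : C.Nonempty
  · obtain ⟨p, hpC, hmaxC⟩ := C.exists_max_image (fun p => (σ p.2 : ℕ) - (σ p.1 : ℕ)) hC
    obtain ⟨c, d⟩ := p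
    rw [hCmem] at hpC
    obtain ⟨hcd, hxc, hcd2, hdy, hprop⟩ := hpC
    dsimp only at hcd hxc hcd2 hdy hprop hmaxC
    rcases lt_or_eq_of_le hdy with hdy' | hdy'
    · refine ⟨d, lt_of_le_of_lt hxc hcd2, hdy', ?_⟩
      rintro ⟨c', d', hcd', m1, m2, m3, m4, m5⟩
      rcases lt_or_ge (σ c) (σ c') with hcc | hcc
      · exact cross hσ hcd hcd' hcc m2 m3
      · have hle := hmaxC (c', d') ((hCmem _).mpr ⟨hcd', m1, lt_trans m2 m3, m4, m5⟩)
        dsimp only at hle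
        have n1 : (σ c' : ℕ) ≤ (σ c : ℕ) := hcc
        have n2 : (σ d : ℕ) < (σ d' : ℕ) := m3
        have n3 : (σ c : ℕ) < (σ d : ℕ) := hcd2
        omega
    · have hxc' : σ x < σ c := by
        rcases lt_or_eq_of_le hxc with h | h
        · exact h
        · exact absurd ⟨h.symm, hdy'⟩ hprop
      refine ⟨c, hxc', lt_of_lt_of_eq hcd2 hdy', ?_⟩
      rintro ⟨c', d', hcd', m1, m2, m3, m4, m5⟩
      rcases lt_or_ge (σ d') (σ d) with hdd | hdd
      · exact cross hσ hcd' hcd m2 m3 hdd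
      · have hle := hmaxC (c', d') ((hCmem _).mpr ⟨hcd', m1, lt_trans m2 m3, m4, m5⟩)
        dsimp only at hle
        have n1 : (σ c' : ℕ) < (σ c : ℕ) := m2
        have n2 : (σ d : ℕ) ≤ (σ d' : ℕ) := hdd
        have n3 : (σ c : ℕ) < (σ d : ℕ) := hcd2
        omega
  · exact ⟨w0, h1, h2, fun hc => by
      obtain ⟨c, d, hcd, m1, m2, m3, m4, m5⟩ := hc
      exact hC ⟨(c, d), (hCmem _).mpr ⟨hcd, m1, lt_trans m2 m3, m4, m5⟩⟩⟩

lemma face_exists (hσ : IsOuterplanarEmbedding G σ) (hconn : G.Connected)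
    (h2c : ∀ v : V, (G.induce {w : V | w ≠ v}).Connected)
    {x y : V} (hxy : G.Adj x y) (hlt : σ x < σ y)
    (hw0 : ∃ w, σ x < σ w ∧ σ w < σ y) :
    ∃ F : Finset V, IsFace G σ F ∧
      ∀ z, z ∈ F ↔ (z = x ∨ z = y ∨ (σ x < σ z ∧ σ z < σ y ∧ ¬ Covered G σ x y z)) := by
  classical
  set F : Finset V := Finset.univ.filter
    (fun z => z = x ∨ z = y ∨ (σ x < σ z ∧ σ z < σ y ∧ ¬ Covered G σ x y z)) with hF0
  have hmem : ∀ z, z ∈ F ↔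
      (z = x ∨ z = y ∨ (σ x < σ z ∧ σ z < σ y ∧ ¬ Covered G σ x y z)) := by
    intro z; simp [hF0]
  have hxF : x ∈ F := (hmem x).mpr (Or.inl rfl)
  have hyF : y ∈ F := (hmem y).mpr (Or.inr (Or.inl rfl))
  have hbound : ∀ z ∈ F, σ x ≤ σ z ∧ σ z ≤ σ y := by
    intro z hz
    rcases (hmem z).mp hz with rfl | rfl | ⟨h1, h2, -⟩
    · exact ⟨le_rfl, hlt.le⟩
    · exact ⟨hlt.le, le_rfl⟩
    · exact ⟨h1.le, h2.le⟩
  have key1 : ∀ u v : V, u ∈ F → v ∈ F → σ u < σ v →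
      (∀ z ∈ F, ¬(σ u < σ z ∧ σ z < σ v)) → G.Adj u v := by
    intro u v huF hvF huv hnb
    by_cases hbet : ∃ w : V, σ u < σ w ∧ σ w < σ v
    · obtain ⟨w₀, hw₀1, hw₀2⟩ := hbet
      have hcov : ∀ z : V, σ u < σ z → σ z < σ v → Covered G σ x y z := by
        intro z h1 h2
        have hzF : z ∉ F := fun h => hnb z h ⟨h1, h2⟩
        have hzx : σ x < σ z := lt_of_le_of_lt (hbound u huF).1 h1
        have hzy : σ z < σ y := lt_of_lt_of_le h2 (hbound v hvF).2
        by_contra hc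
        exact hzF ((hmem z).mpr (Or.inr (Or.inr ⟨hzx, hzy, hc⟩)))
      have hwithin : ∀ z c d : V, σ u < σ z → σ z < σ v → G.Adj c d → σ x ≤ σ c →
          σ c < σ z → σ z < σ d → σ d ≤ σ y → ¬(σ c = σ x ∧ σ d = σ y) →
          σ u ≤ σ c ∧ σ d ≤ σ v := by
        intro z c d hz1 hz2 hcd h1 h2 h3 h4 h5
        constructor
        · by_contra hcon
          have hcu : σ c < σ u := not_le.mp hcon
          have hcovu : Covered G σ x y u := ⟨c, d, hcd, h1, hcu, lt_trans hz1 h3, h4, h5⟩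
          rcases (hmem u).mp huF with rfl | rfl | ⟨-, -, hnc⟩
          · exact absurd h1 (not_le.mpr hcu)
          · exact absurd (lt_trans hz1 (lt_of_lt_of_le hz2 (hbound v hvF).2)) (lt_irrefl _)
          · exact hnc hcovu
        · by_contra hcon
          have hdv : σ v < σ d := not_le.mp hcon
          have hcovv : Covered G σ x y v := ⟨c, d, hcd, h1, lt_trans h2 hz2, hdv, h4, h5⟩
          rcases (hmem v).mp hvF with rfl | rfl | ⟨-, -, hnc⟩
          · exact absurd (lt_of_le_of_lt (hbound u huF).1 huv) (lt_irrefl _)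
          · exact absurd (lt_of_le_of_lt h4 hdv) (lt_irrefl _)
          · exact hnc hcovv
      set D : Finset (V × V) := Finset.univ.filter
        (fun p => G.Adj p.1 p.2 ∧ σ u ≤ σ p.1 ∧ σ p.1 < σ p.2 ∧ σ p.2 ≤ σ v) with hD0
      have hDmem : ∀ p : V × V, p ∈ D ↔ (G.Adj p.1 p.2 ∧ σ u ≤ σ p.1 ∧
          σ p.1 < σ p.2 ∧ σ p.2 ≤ σ v) := by intro p; simp [hD0]
      have hDne : D.Nonempty := by
        obtain ⟨c, d, hcd, h1, h2, h3, h4, h5⟩ := hcov w₀ hw₀1 hw₀2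
        obtain ⟨hc1, hc2⟩ := hwithin w₀ c d hw₀1 hw₀2 hcd h1 h2 h3 h4 h5
        exact ⟨(c, d), (hDmem _).mpr ⟨hcd, hc1, lt_trans h2 h3, hc2⟩⟩
      obtain ⟨p, hpD, hmaxD⟩ := D.exists_max_image (fun p => (σ p.2 : ℕ) - (σ p.1 : ℕ)) hDne
      obtain ⟨a, b⟩ := p
      rw [hDmem] at hpD
      obtain ⟨hab, hua, hab2, hbv⟩ := hpD
      dsimp only at hab hua hab2 hbv hmaxD
      have hau : σ a = σ u := by
        by_contra hne
        have h1 : σ u < σ a := lt_of_le_of_ne hua (fun h => hne h.symm)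
        have h2 : σ a < σ v := lt_of_lt_of_le hab2 hbv
        obtain ⟨c, d, hcd, hc1, hc2, hc3, hc4, hc5⟩ := hcov a h1 h2
        obtain ⟨hw1, hw2⟩ := hwithin a c d h1 h2 hcd hc1 hc2 hc3 hc4 hc5
        rcases lt_or_ge (σ d) (σ b) with hdb | hdb
        · exact cross hσ hcd hab hc2 hc3 hdb
        · have hle := hmaxD (c, d) ((hDmem _).mpr ⟨hcd, hw1, lt_trans hc2 hc3, hw2⟩)
          dsimp only at hle
          have n1 : (σ c : ℕ) < (σ a : ℕ) := hc2
          have n2 : (σ b : ℕ) ≤ (σ d : ℕ) := hdb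
          have n3 : (σ a : ℕ) < (σ b : ℕ) := hab2
          omega
      have hbv' : σ b = σ v := by
        by_contra hne
        have h2 : σ b < σ v := lt_of_le_of_ne hbv hne
        have h1 : σ u < σ b := lt_of_le_of_lt hua hab2
        obtain ⟨c, d, hcd, hc1, hc2, hc3, hc4, hc5⟩ := hcov b h1 h2
        obtain ⟨hw1, hw2⟩ := hwithin b c d h1 h2 hcd hc1 hc2 hc3 hc4 hc5
        rcases lt_or_ge (σ a) (σ c) with hac | hac
        · exact cross hσ hab hcd hac hc2 hc3
        · have hle := hmaxD (c, d) ((hDmem _).mpr ⟨hcd, hw1, lt_trans hc2 hc3, hw2⟩)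
          dsimp only at hle
          have n1 : (σ c : ℕ) ≤ (σ a : ℕ) := hac
          have n2 : (σ b : ℕ) < (σ d : ℕ) := hc3
          have n3 : (σ a : ℕ) < (σ b : ℕ) := hab2
          omega
      have ha' : a = u := σ.injective hau
      have hb' : b = v := σ.injective hbv'
      exact ha' ▸ hb' ▸ hab
    · have hsucc : (σ v : ℕ) = (σ u : ℕ) + 1 := by
        by_contra hne
        have h1 : (σ u : ℕ) + 1 < (σ v : ℕ) := by
          have := Fin.lt_def.mp huv; omega
        have h2 : (σ u : ℕ) + 1 < Fintype.card V := lt_trans h1 (σ v).isLt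
        refine hbet ⟨σ.symm ⟨(σ u : ℕ) + 1, h2⟩, ?_, ?_⟩
        · rw [Fin.lt_def, Equiv.apply_symm_apply]; simp
        · rw [Fin.lt_def, Equiv.apply_symm_apply]; exact h1
      exact ham hσ hconn h2c hsucc
  have aux : ∀ u v : V, u ∈ F → v ∈ F → G.Adj u v → σ u < σ v →
      (nextIn σ F u v ∨ nextIn σ F v u) := by
    intro u v huF hvF hadj huv
    by_cases hxy' : u = x ∧ v = y
    · obtain ⟨rfl, rfl⟩ := hxy'
      exact Or.inr ⟨hvF, huF, hadj.ne', Or.inr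
        ⟨fun z hz => (hbound z hz).2, fun z hz => (hbound z hz).1⟩⟩
    · refine Or.inl ⟨huF, hvF, hadj.ne, Or.inl ⟨huv, ?_⟩⟩
      intro w hw h1
      by_contra hcon
      have h2 : σ w < σ v := not_le.mp hcon
      rcases (hmem w).mp hw with rfl | rfl | ⟨-, -, hnc⟩
      · exact absurd (lt_of_le_of_lt (hbound u huF).1 h1) (lt_irrefl _)
      · exact absurd (lt_of_lt_of_le h2 (hbound v hvF).2) (lt_irrefl _)
      · exact hnc ⟨u, v, hadj, (hbound u huF).1, h1, h2, (hbound v hvF).2,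
          fun he => hxy' ⟨σ.injective he.1, σ.injective he.2⟩⟩
  refine ⟨F, ⟨?_, ?_⟩, hmem⟩
  · obtain ⟨w₀', hw1', hw2'⟩ := hw0
    obtain ⟨w, h1, h2, h3⟩ := exists_uncovered hσ hxy hlt hw1' hw2'
    have hwF : w ∈ F := (hmem w).mpr (Or.inr (Or.inr ⟨h1, h2, h3⟩))
    have hxw : x ≠ w := fun h => absurd (h ▸ h1) (lt_irrefl _)
    have hyw : y ≠ w := fun h => absurd (h ▸ h2) (lt_irrefl _)
    have hxyne : x ≠ y := fun h => absurd (h ▸ hlt) (lt_irrefl _)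
    have hsub : ({x, y, w} : Finset V) ⊆ F := by
      intro z hz
      simp only [Finset.mem_insert, Finset.mem_singleton] at hz
      rcases hz with rfl | rfl | rfl
      · exact hxF
      · exact hyF
      · exact hwF
    have hcard3 : ({x, y, w} : Finset V).card = 3 := by
      rw [Finset.card_insert_of_notMem (by simp [hxyne, hxw]),
        Finset.card_insert_of_notMem (by simp [hyw]), Finset.card_singleton]
    exact hcard3 ▸ Finset.card_le_card hsub
  · intro u huF v hvF
    constructor
    · intro hadj
      rcases lt_trichotomy (σ u) (σ v) with h | h | h
      · exact aux u v huF hvF hadj h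
      · exact absurd (σ.injective h ▸ hadj) (G.loopless.irrefl v)
      · exact (aux v u hvF huF hadj.symm h).symm
    · intro h
      rcases h with ⟨h1, h2, h3, h4 | h4⟩ | ⟨h1, h2, h3, h4 | h4⟩
      · exact key1 u v h1 h2 h4.1 (fun z hz hb => absurd (h4.2 z hz hb.1) (not_le.mpr hb.2))
      · have huy : u = y := σ.injective (le_antisymm (hbound u h1).2 (h4.1 y hyF))
        have hvx : v = x := σ.injective (le_antisymm (h4.2 x hxF) (hbound v h2).1)
        rw [huy, hvx]; exact hxy.symm
      · exact (key1 v u h1 h2 h4.1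
          (fun z hz hb => absurd (h4.2 z hz hb.1) (not_le.mpr hb.2))).symm
      · have hvy : v = y := σ.injective (le_antisymm (hbound v h1).2 (h4.1 y hyF))
        have hux : u = x := σ.injective (le_antisymm (h4.2 x hxF) (hbound u h2).1)
        rw [hvy, hux]; exact hxy
      

lemma face_pair_adj {H : Finset V} (hH : IsFace G σ H) {c d : V} (hc : c ∈ H) (hd : d ∈ H)
    (hlt : σ c < σ d) (hbet : ∀ t ∈ H, ¬(σ c < σ t ∧ σ t < σ d)) : G.Adj c d :=
  (hH.2 c hc d hd).mpr (Or.inl ⟨hc, hd, fun h => absurd (h ▸ hlt) (lt_irrefl _),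
    Or.inl ⟨hlt, fun t ht h1 => not_lt.mp (fun h => hbet t ht ⟨h1, h⟩)⟩⟩)

lemma face_wrap_adj {H : Finset V} (hH : IsFace G σ H) {m M : V} (hm : m ∈ H) (hM : M ∈ H)
    (hne : M ≠ m) (hmax : ∀ t ∈ H, σ t ≤ σ M) (hmin : ∀ t ∈ H, σ m ≤ σ t) : G.Adj M m :=
  (hH.2 M hM m hm).mpr (Or.inl ⟨hM, hm, hne, Or.inr ⟨hmax, hmin⟩⟩)

lemma face_extremes {H : Finset V} (hH : IsFace G σ H) :
    ∃ m M, m ∈ H ∧ M ∈ H ∧ σ m < σ M ∧ (∀ t ∈ H, σ m ≤ σ t ∧ σ t ≤ σ M) := by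
  have hne : H.Nonempty := Finset.card_pos.mp (by have := hH.1; omega)
  obtain ⟨M, hM, hMmax⟩ := H.exists_max_image (fun t => σ t) hne
  obtain ⟨m, hm, hmmin⟩ := H.exists_min_image (fun t => σ t) hne
  have h2 : 1 < H.card := by have := hH.1; omega
  obtain ⟨a, ha, b, hb, hab⟩ := Finset.one_lt_card.mp h2
  have hmM : σ m < σ M := by
    have h1 : (σ m : ℕ) ≤ (σ a : ℕ) := hmmin a ha
    have h2' : (σ a : ℕ) ≤ (σ M : ℕ) := hMmax a ha
    have h3 : (σ m : ℕ) ≤ (σ b : ℕ) := hmmin b hb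
    have h4 : (σ b : ℕ) ≤ (σ M : ℕ) := hMmax b hb
    have h5 : (σ a : ℕ) ≠ (σ b : ℕ) := fun h => hab (σ.injective (Fin.ext h))
    rw [Fin.lt_def]
    omega
  exact ⟨m, M, hm, hM, hmM, fun t ht => ⟨hmmin t ht, hMmax t ht⟩⟩

lemma face_adj_cases {H : Finset V} (hH : IsFace G σ H) {u v : V} (hu : u ∈ H) (hv : v ∈ H)
    (hadj : G.Adj u v) (hlt : σ u < σ v) :
    (∀ t ∈ H, ¬(σ u < σ t ∧ σ t < σ v)) ∨
      ((∀ t ∈ H, σ u ≤ σ t) ∧ (∀ t ∈ H, σ t ≤ σ v)) := by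
  rcases (hH.2 u hu v hv).mp hadj with ⟨-, -, -, h⟩ | ⟨-, -, -, h⟩
  · rcases h with ⟨h1, h2⟩ | ⟨h1, h2⟩
    · refine Or.inl ?_
      rintro t ht ⟨a1, a2⟩
      exact absurd (h2 t ht a1) (not_le.mpr a2)
    · exact absurd (h1 v hv) (not_le.mpr hlt)
  · rcases h with ⟨h1, h2⟩ | ⟨h1, h2⟩
    · exact absurd hlt (asymm h1)
    · exact Or.inr ⟨fun t ht => h2 t ht, fun t ht => h1 t ht⟩

lemma no_straddle (hσ : IsOuterplanarEmbedding G σ) {H : Finset V} (hH : IsFace G σ H)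
    {a b w z : V} (hab : G.Adj a b) (hlt : σ a < σ b) (hw : w ∈ H) (hw1 : σ a < σ w)
    (hw2 : σ w < σ b) (hz : z ∈ H) (hz' : σ z < σ a ∨ σ b < σ z) : False := by
  classical
  rcases hz' with hzlt | hzgt
  · obtain ⟨p, hp, hpmax⟩ := (H.filter (fun h => σ h ≤ σ a)).exists_max_image
      (fun h => σ h) ⟨z, by simp [hz, hzlt.le]⟩
    obtain ⟨q, hq, hqmin⟩ := (H.filter (fun h => σ a < σ h)).exists_min_image
      (fun h => σ h) ⟨w, by simp [hw, hw1]⟩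
    simp only [Finset.mem_filter] at hp hq
    have hcons : ∀ t ∈ H, ¬(σ p < σ t ∧ σ t < σ q) := by
      rintro t ht ⟨h1, h2⟩
      rcases le_or_gt (σ t) (σ a) with h | h
      · exact absurd (hpmax t (by simp [ht, h])) (not_le.mpr h1)
      · exact absurd (hqmin t (by simp [ht, h])) (not_le.mpr h2)
    have hpq : σ p < σ q := lt_of_le_of_lt hp.2 hq.2
    have hadj := face_pair_adj hH hp.1 hq.1 hpq hcons
    have hqb : σ q < σ b := lt_of_le_of_lt (hqmin w (by simp [hw, hw1])) hw2
    rcases lt_or_eq_of_le hp.2 with hpa | hpa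
    · exact cross hσ hadj hab hpa hq.2 hqb
    · have hpa' : p = a := σ.injective hpa
      have haH : a ∈ H := hpa' ▸ hp.1
      by_cases hbH : b ∈ H
      · rcases face_adj_cases hH haH hbH hab hlt with hcase | hcase
        · exact hcase w hw ⟨hw1, hw2⟩
        · exact absurd (hcase.1 z hz) (not_le.mpr hzlt)
      · by_cases hBne : (H.filter (fun h => σ b ≤ σ h)).Nonempty
        · obtain ⟨r, hr, hrmin⟩ := (H.filter (fun h => σ b ≤ σ h)).exists_min_image
            (fun h => σ h) hBne
          obtain ⟨s, hs, hsmax⟩ := (H.filter (fun h => σ h < σ b)).exists_max_image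
            (fun h => σ h) ⟨w, by simp [hw, hw2]⟩
          simp only [Finset.mem_filter] at hr hs
          have hsr : σ s < σ r := lt_of_lt_of_le hs.2 hr.2
          have hcons2 : ∀ t ∈ H, ¬(σ s < σ t ∧ σ t < σ r) := by
            rintro t ht ⟨h1, h2⟩
            rcases lt_or_ge (σ t) (σ b) with h | h
            · exact absurd (hsmax t (by simp [ht, h])) (not_le.mpr h1)
            · exact absurd (hrmin t (by simp [ht, h])) (not_le.mpr h2)
          have hadj2 := face_pair_adj hH hs.1 hr.1 hsr hcons2
          have has : σ a < σ s := lt_of_lt_of_le hw1 (hsmax w (by simp [hw, hw2]))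
          have hbr : σ b < σ r :=
            lt_of_le_of_ne hr.2 (fun h => hbH (σ.injective h.symm ▸ hr.1))
          exact cross hσ hab hadj2 has hs.2 hbr
        · obtain ⟨m, M, hm, hM, hmM, hbd⟩ := face_extremes hH
          have hadj3 : G.Adj M m := face_wrap_adj hH hm hM
            (fun h => absurd (h ▸ hmM) (lt_irrefl _)) (fun t ht => (hbd t ht).2)
            (fun t ht => (hbd t ht).1)
          have h1 : σ m < σ a := lt_of_le_of_lt (hbd z hz).1 hzlt
          have h2 : σ a < σ M := lt_of_lt_of_le hw1 (hbd w hw).2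
          have h3 : σ M < σ b := by
            by_contra hcon
            exact hBne ⟨M, by simp [hM, not_lt.mp hcon]⟩
          exact cross hσ hadj3.symm hab h1 h2 h3
  · obtain ⟨p, hp, hpmax⟩ := (H.filter (fun h => σ h < σ b)).exists_max_image
      (fun h => σ h) ⟨w, by simp [hw, hw2]⟩
    obtain ⟨q, hq, hqmin⟩ := (H.filter (fun h => σ b ≤ σ h)).exists_min_image
      (fun h => σ h) ⟨z, by simp [hz, hzgt.le]⟩
    simp only [Finset.mem_filter] at hp hq
    have hcons : ∀ t ∈ H, ¬(σ p < σ t ∧ σ t < σ q) := by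
      rintro t ht ⟨h1, h2⟩
      rcases lt_or_ge (σ t) (σ b) with h | h
      · exact absurd (hpmax t (by simp [ht, h])) (not_le.mpr h1)
      · exact absurd (hqmin t (by simp [ht, h])) (not_le.mpr h2)
    have hpq : σ p < σ q := lt_of_lt_of_le hp.2 hq.2
    have hadj := face_pair_adj hH hp.1 hq.1 hpq hcons
    have hap : σ a < σ p := lt_of_lt_of_le hw1 (hpmax w (by simp [hw, hw2]))
    rcases lt_or_eq_of_le hq.2 with hbq | hbq
    · exact cross hσ hab hadj hap hp.2 hbq
    · have hqb : q = b := σ.injective hbq.symm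
      have hbH : b ∈ H := hqb ▸ hq.1
      by_cases haH : a ∈ H
      · rcases face_adj_cases hH haH hbH hab hlt with hcase | hcase
        · exact hcase w hw ⟨hw1, hw2⟩
        · exact absurd (hcase.2 z hz) (not_le.mpr hzgt)
      · by_cases hAne : (H.filter (fun h => σ h ≤ σ a)).Nonempty
        · obtain ⟨s, hs, hsmax⟩ := (H.filter (fun h => σ h ≤ σ a)).exists_max_image
            (fun h => σ h) hAne
          obtain ⟨r, hr, hrmin⟩ := (H.filter (fun h => σ a < σ h)).exists_min_image
            (fun h => σ h) ⟨w, by simp [hw, hw1]⟩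
          simp only [Finset.mem_filter] at hs hr
          have hsr : σ s < σ r := lt_of_le_of_lt hs.2 hr.2
          have hcons2 : ∀ t ∈ H, ¬(σ s < σ t ∧ σ t < σ r) := by
            rintro t ht ⟨h1, h2⟩
            rcases le_or_gt (σ t) (σ a) with h | h
            · exact absurd (hsmax t (by simp [ht, h])) (not_le.mpr h1)
            · exact absurd (hrmin t (by simp [ht, h])) (not_le.mpr h2)
          have hadj2 := face_pair_adj hH hs.1 hr.1 hsr hcons2
          have hsa : σ s < σ a :=
            lt_of_le_of_ne hs.2 (fun h => haH (σ.injective h ▸ hs.1))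
          have hrb : σ r < σ b := lt_of_le_of_lt (hrmin w (by simp [hw, hw1])) hw2
          exact cross hσ hadj2 hab hsa hr.2 hrb
        · obtain ⟨m, M, hm, hM, hmM, hbd⟩ := face_extremes hH
          have hadj3 : G.Adj M m := face_wrap_adj hH hm hM
            (fun h => absurd (h ▸ hmM) (lt_irrefl _)) (fun t ht => (hbd t ht).2)
            (fun t ht => (hbd t ht).1)
          have h1 : σ a < σ m := by
            by_contra hcon
            exact hAne ⟨m, by simp [hm, not_lt.mp hcon]⟩
          have h2 : σ m < σ b := lt_of_le_of_lt (hbd w hw).1 hw2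
          have h3 : σ b < σ M := lt_of_lt_of_le hzgt (hbd z hz).2
          exact cross hσ hab hadj3.symm h1 h2 h3

lemma exists_third (A : Finset V) (x y : V) (h3 : 3 ≤ A.card) :
    ∃ t ∈ A, t ≠ x ∧ t ≠ y := by
  classical
  by_contra h
  push_neg at h
  have hsub : A ⊆ {x, y} := by
    intro t ht
    simp only [Finset.mem_insert, Finset.mem_singleton]
    by_cases htx : t = x
    · exact Or.inl htx
    · exact Or.inr (h t ht htx)
  have h1 := Finset.card_le_card hsub
  have h2 : ({x, y} : Finset V).card ≤ 2 :=
    le_trans (Finset.card_insert_le x {y}) (by simp)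
  omega

lemma third_between {A : Finset V} (hA : IsFace G σ A) {x y : V} (hxA : x ∈ A) (hyA : y ∈ A)
    (hbase : ∀ t ∈ A, σ x ≤ σ t ∧ σ t ≤ σ y)
    (hlin : ∀ t ∈ A, ¬(σ x < σ t ∧ σ t < σ y)) : False := by
  obtain ⟨t, ht, htx, hty⟩ := exists_third A x y hA.1
  have h1 : σ x < σ t :=
    lt_of_le_of_ne (hbase t ht).1 (fun h => htx (σ.injective h.symm))
  have h2 : σ t < σ y :=
    lt_of_le_of_ne (hbase t ht).2 (fun h => hty (σ.injective h))
  exact hlin t ht ⟨h1, h2⟩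

lemma base_unique (hσ : IsOuterplanarEmbedding G σ) {F F' : Finset V}
    (hF : IsFace G σ F) (hF' : IsFace G σ F') {x y : V}
    (hx : x ∈ F) (hy : y ∈ F) (hx' : x ∈ F') (hy' : y ∈ F')
    (hbF : ∀ t ∈ F, σ x ≤ σ t ∧ σ t ≤ σ y) (hbF' : ∀ t ∈ F', σ x ≤ σ t ∧ σ t ≤ σ y) :
    F = F' := by
  classical
  have aux : ∀ A B : Finset V, IsFace G σ A → IsFace G σ B → x ∈ A → y ∈ A → x ∈ B →
      y ∈ B → (∀ t ∈ A, σ x ≤ σ t ∧ σ t ≤ σ y) → (∀ t ∈ B, σ x ≤ σ t ∧ σ t ≤ σ y) →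
      B ⊆ A := by
    intro A B hA hB hxA hyA hxB hyB hbA hbB w hwB
    by_contra hwA
    have hwx : w ≠ x := fun h => hwA (h ▸ hxA)
    have hwy : w ≠ y := fun h => hwA (h ▸ hyA)
    have hw1 : σ x < σ w :=
      lt_of_le_of_ne (hbB w hwB).1 (fun h => hwx (σ.injective h.symm))
    have hw2 : σ w < σ y :=
      lt_of_le_of_ne (hbB w hwB).2 (fun h => hwy (σ.injective h))
    obtain ⟨p, hp, hpmax⟩ := (A.filter (fun h => σ h ≤ σ w)).exists_max_image
      (fun h => σ h) ⟨x, by simp [hxA, hw1.le]⟩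
    obtain ⟨q, hq, hqmin⟩ := (A.filter (fun h => σ w < σ h)).exists_min_image
      (fun h => σ h) ⟨y, by simp [hyA, hw2]⟩
    simp only [Finset.mem_filter] at hp hq
    have hpw : σ p < σ w :=
      lt_of_le_of_ne hp.2 (fun h => hwA (σ.injective h ▸ hp.1))
    have hcons : ∀ t ∈ A, ¬(σ p < σ t ∧ σ t < σ q) := by
      rintro t ht ⟨h1, h2⟩
      rcases le_or_gt (σ t) (σ w) with h | h
      · exact absurd (hpmax t (by simp [ht, h])) (not_le.mpr h1)
      · exact absurd (hqmin t (by simp [ht, h])) (not_le.mpr h2)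
    have hadj := face_pair_adj hA hp.1 hq.1 (lt_trans hpw hq.2) hcons
    by_cases hpx : σ x < σ p
    · exact no_straddle hσ hB hadj (lt_trans hpw hq.2) hwB hpw hq.2 hxB (Or.inl hpx)
    · have hpx' : p = x := σ.injective (le_antisymm (not_lt.mp hpx) (hbA p hp.1).1)
      by_cases hqy : σ q < σ y
      · exact no_straddle hσ hB hadj (lt_trans hpw hq.2) hwB hpw hq.2 hyB (Or.inr hqy)
      · have hqy' : q = y := σ.injective (le_antisymm (hbA q hq.1).2 (not_lt.mp hqy))
        refine third_between hA hxA hyA hbA ?_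
        intro t ht ⟨h1, h2⟩
        exact hcons t ht ⟨hpx' ▸ h1, hqy' ▸ h2⟩
  exact Finset.Subset.antisymm (aux F' F hF' hF hx' hy' hx hy hbF' hbF)
    (aux F F' hF hF' hx hy hx' hy' hbF hbF')

lemma lin_unique (hσ : IsOuterplanarEmbedding G σ) {F F' : Finset V}
    (hF : IsFace G σ F) (hF' : IsFace G σ F') {x y : V} (hlt : σ x < σ y)
    (hx : x ∈ F) (hy : y ∈ F) (hx' : x ∈ F') (hy' : y ∈ F')
    (hlin : ∀ t ∈ F, ¬(σ x < σ t ∧ σ t < σ y))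
    (hlin' : ∀ t ∈ F', ¬(σ x < σ t ∧ σ t < σ y)) : F = F' := by
  classical
  have aux : ∀ A B : Finset V, IsFace G σ A → IsFace G σ B → x ∈ A → y ∈ A → x ∈ B →
      y ∈ B → (∀ t ∈ A, ¬(σ x < σ t ∧ σ t < σ y)) →
      (∀ t ∈ B, ¬(σ x < σ t ∧ σ t < σ y)) → B ⊆ A := by
    intro A B hA hB hxA hyA hxB hyB hlinA hlinB w hwB
    by_contra hwA
    have hwx : w ≠ x := fun h => hwA (h ▸ hxA)
    have hwy : w ≠ y := fun h => hwA (h ▸ hyA)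
    have hwside : σ w < σ x ∨ σ y < σ w := by
      rcases lt_trichotomy (σ w) (σ x) with h | h | h
      · exact Or.inl h
      · exact absurd (σ.injective h) hwx
      · rcases lt_trichotomy (σ w) (σ y) with h' | h' | h'
        · exact absurd ⟨h, h'⟩ (hlinB w hwB)
        · exact absurd (σ.injective h') hwy
        · exact Or.inr h'
    rcases hwside with hws | hws
    · -- σ w < σ x
      obtain ⟨p, hp, hpmin⟩ := (A.filter (fun h => σ w < σ h)).exists_min_image
        (fun h => σ h) ⟨x, by simp [hxA, hws]⟩
      simp only [Finset.mem_filter] at hp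
      have hpx : σ p ≤ σ x := hpmin x (by simp [hxA, hws])
      by_cases hQ : (A.filter (fun h => σ h < σ w)).Nonempty
      · obtain ⟨q, hq, hqmax⟩ := (A.filter (fun h => σ h < σ w)).exists_max_image
          (fun h => σ h) hQ
        simp only [Finset.mem_filter] at hq
        have hcons : ∀ t ∈ A, ¬(σ q < σ t ∧ σ t < σ p) := by
          rintro t ht ⟨h1, h2⟩
          rcases lt_or_ge (σ t) (σ w) with h | h
          · exact absurd (hqmax t (by simp [ht, h])) (not_le.mpr h1)
          · have h' : σ w < σ t :=
              lt_of_le_of_ne h (fun he => hwA (σ.injective he.symm ▸ ht))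
            exact absurd (hpmin t (by simp [ht, h'])) (not_le.mpr h2)
        have hadj := face_pair_adj hA hq.1 hp.1 (lt_trans hq.2 hp.2) hcons
        have hyp : σ p < σ y := lt_of_le_of_lt hpx hlt
        exact no_straddle hσ hB hadj (lt_trans hq.2 hp.2) hwB hq.2 hp.2 hyB
          (Or.inr hyp)
      · obtain ⟨m, M, hm, hM, hmM, hbd⟩ := face_extremes hA
        have hadj3 : G.Adj m M := (face_wrap_adj hA hm hM
          (fun h => absurd (h ▸ hmM) (lt_irrefl _)) (fun t ht => (hbd t ht).2)
          (fun t ht => (hbd t ht).1)).symm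
        have hwm : σ w < σ m := by
          by_contra hcon
          have h1 : σ m ≤ σ w := not_lt.mp hcon
          have h2 : σ m < σ w :=
            lt_of_le_of_ne h1 (fun h => hwA (σ.injective h ▸ hm))
          exact hQ ⟨m, by simp [hm, h2]⟩
        have hmx : σ m ≤ σ x := (hbd x hxA).1
        by_cases hyM : σ y < σ M
        · have hmy : σ m < σ y := lt_of_le_of_lt hmx hlt
          exact no_straddle hσ hB hadj3 hmM hyB hmy hyM hwB (Or.inl hwm)
        · have hMy : M = y := σ.injective (le_antisymm (not_lt.mp hyM) (hbd y hyA).2)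
          by_cases hmx' : σ m < σ x
          · have hxM : σ x < σ M := by rw [hMy]; exact hlt
            exact no_straddle hσ hB hadj3 hmM hxB hmx' hxM hwB (Or.inl hwm)
          · have hmx'' : m = x := σ.injective (le_antisymm hmx (not_lt.mp hmx'))
            refine third_between hA hxA hyA ?_ hlinA
            intro t ht
            exact ⟨by rw [← hmx'']; exact (hbd t ht).1, by rw [← hMy]; exact (hbd t ht).2⟩
    · -- σ y < σ w
      obtain ⟨p, hp, hpmax⟩ := (A.filter (fun h => σ h ≤ σ w)).exists_max_image
        (fun h => σ h) ⟨y, by simp [hyA, hws.le]⟩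
      simp only [Finset.mem_filter] at hp
      have hyp : σ y ≤ σ p := hpmax y (by simp [hyA, hws.le])
      have hpw : σ p < σ w :=
        lt_of_le_of_ne hp.2 (fun h => hwA (σ.injective h ▸ hp.1))
      by_cases hQ : (A.filter (fun h => σ w < σ h)).Nonempty
      · obtain ⟨q, hq, hqmin⟩ := (A.filter (fun h => σ w < σ h)).exists_min_image
          (fun h => σ h) hQ
        simp only [Finset.mem_filter] at hq
        have hcons : ∀ t ∈ A, ¬(σ p < σ t ∧ σ t < σ q) := by
          rintro t ht ⟨h1, h2⟩
          rcases le_or_gt (σ t) (σ w) with h | h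
          · exact absurd (hpmax t (by simp [ht, h])) (not_le.mpr h1)
          · exact absurd (hqmin t (by simp [ht, h])) (not_le.mpr h2)
        have hadj := face_pair_adj hA hp.1 hq.1 (lt_trans hpw hq.2) hcons
        exact no_straddle hσ hB hadj (lt_trans hpw hq.2) hwB hpw hq.2 hxB
          (Or.inl (lt_of_lt_of_le hlt hyp))
      · obtain ⟨m, M, hm, hM, hmM, hbd⟩ := face_extremes hA
        have hadj3 : G.Adj m M := (face_wrap_adj hA hm hM
          (fun h => absurd (h ▸ hmM) (lt_irrefl _)) (fun t ht => (hbd t ht).2)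
          (fun t ht => (hbd t ht).1)).symm
        have hMw : σ M < σ w := by
          by_contra hcon
          have h1 : σ w ≤ σ M := not_lt.mp hcon
          have h2 : σ w < σ M :=
            lt_of_le_of_ne h1 (fun h => hwA (σ.injective h.symm ▸ hM))
          exact hQ ⟨M, by simp [hM, h2]⟩
        have hmy : σ m < σ y := lt_of_le_of_lt (hbd x hxA).1 hlt
        by_cases hyM : σ y < σ M
        · exact no_straddle hσ hB hadj3 hmM hyB hmy hyM hwB (Or.inr hMw)
        · have hMy : M = y := σ.injective (le_antisymm (not_lt.mp hyM) (hbd y hyA).2)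
          by_cases hmx' : σ m < σ x
          · have hxM : σ x < σ M := by rw [hMy]; exact hlt
            exact no_straddle hσ hB hadj3 hmM hxB hmx' hxM hwB (Or.inr hMw)
          · have hmx'' : m = x := σ.injective (le_antisymm (hbd x hxA).1 (not_lt.mp hmx'))
            refine third_between hA hxA hyA ?_ hlinA
            intro t ht
            exact ⟨by rw [← hmx'']; exact (hbd t ht).1, by rw [← hMy]; exact (hbd t ht).2⟩
  exact Finset.Subset.antisymm (aux F' F hF' hF hx' hy' hx hy hlin' hlin)
    (aux F F' hF hF' hx hy hx' hy' hlin hlin')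

lemma parent_exists (hσ : IsOuterplanarEmbedding G σ) (hconn : G.Connected)
    (h2c : ∀ v : V, (G.induce {w : V | w ≠ v}).Connected) (hcard : 3 ≤ Fintype.card V)
    {F : Finset V} (hF : IsFace G σ F) {m M : V}
    (hm : m ∈ F) (hM : M ∈ F) (hbd : ∀ t ∈ F, σ m ≤ σ t ∧ σ t ≤ σ M) (hmM : σ m < σ M)
    (hroot : ¬((σ m : ℕ) = 0 ∧ (σ M : ℕ) = Fintype.card V - 1)) :
    ∃ F' : Finset V, IsFace G σ F' ∧ F' ≠ F ∧ m ∈ F' ∧ M ∈ F' ∧ G.Adj m M ∧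
      ∃ c d, c ∈ F' ∧ d ∈ F' ∧ σ c ≤ σ m ∧ σ M ≤ σ d ∧
        (σ M : ℕ) - (σ m : ℕ) < (σ d : ℕ) - (σ c : ℕ) := by
  classical
  have hmM' : G.Adj m M := (face_wrap_adj hF hm hM
    (fun h => absurd (h ▸ hmM) (lt_irrefl _)) (fun t ht => (hbd t ht).2)
    (fun t ht => (hbd t ht).1)).symm
  set E : Finset (V × V) := Finset.univ.filter (fun p => G.Adj p.1 p.2 ∧ σ p.1 ≤ σ m ∧
    σ M ≤ σ p.2 ∧ ¬(σ p.1 = σ m ∧ σ p.2 = σ M)) with hE0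
  have hEmem : ∀ p : V × V, p ∈ E ↔ (G.Adj p.1 p.2 ∧ σ p.1 ≤ σ m ∧
      σ M ≤ σ p.2 ∧ ¬(σ p.1 = σ m ∧ σ p.2 = σ M)) := by intro p; simp [hE0]
  have hEne : E.Nonempty := by
    set u₀ : V := σ.symm ⟨0, by omega⟩ with hu₀
    set ut : V := σ.symm ⟨Fintype.card V - 1, by omega⟩ with hut
    have h0 : (σ u₀ : ℕ) = 0 := by rw [hu₀, Equiv.apply_symm_apply]
    have h1 : (σ ut : ℕ) = Fintype.card V - 1 := by rw [hut, Equiv.apply_symm_apply]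
    refine ⟨(u₀, ut), (hEmem _).mpr ⟨hamWrap hσ hconn h2c hcard h0 h1, ?_, ?_, ?_⟩⟩
    · rw [Fin.le_def, h0]; omega
    · rw [Fin.le_def, h1]; have := (σ M).isLt; omega
    · rintro ⟨e1, e2⟩
      refine hroot ⟨?_, ?_⟩
      · rw [← congrArg Fin.val e1, h0]
      · rw [← congrArg Fin.val e2, h1]
  obtain ⟨p, hpE, hminE⟩ := E.exists_min_image (fun p => (σ p.2 : ℕ) - (σ p.1 : ℕ)) hEne
  obtain ⟨c, d⟩ := p
  rw [hEmem] at hpE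
  obtain ⟨hcd, hcm, hMd, hprop⟩ := hpE
  dsimp only at hcd hcm hMd hprop hminE
  have hcd' : σ c < σ d := lt_of_le_of_lt hcm (lt_of_lt_of_le hmM hMd)
  have hint : ∃ w, σ c < σ w ∧ σ w < σ d := by
    rcases lt_or_eq_of_le hcm with h | h
    · exact ⟨m, h, lt_of_lt_of_le hmM hMd⟩
    · rcases lt_or_eq_of_le hMd with h' | h'
      · exact ⟨M, lt_of_le_of_lt hcm hmM, h'⟩
      · exact absurd ⟨h, h'.symm⟩ hprop
  obtain ⟨F', hF', hmem'⟩ := face_exists hσ hconn h2c hcd hcd' hint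
  have hcF' : c ∈ F' := (hmem' c).mpr (Or.inl rfl)
  have hdF' : d ∈ F' := (hmem' d).mpr (Or.inr (Or.inl rfl))
  -- m ∈ F'
  have hmF' : m ∈ F' := by
    rcases lt_or_eq_of_le hcm with hcm' | hcm'
    · refine (hmem' m).mpr (Or.inr (Or.inr ⟨hcm', lt_of_lt_of_le hmM hMd, ?_⟩))
      rintro ⟨e, f, hef, m1, m2, m3, m4, m5⟩
      rcases lt_trichotomy (σ f) (σ M) with hfM | hfM | hfM
      · exact cross hσ hef hmM' m2 m3 hfM
      · have hfM' : f = M := σ.injective hfM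
        have hEm : (e, M) ∈ E := (hEmem _).mpr ⟨hfM' ▸ hef, m2.le, le_rfl,
          fun he => absurd he.1 (ne_of_lt m2)⟩
        have hle := hminE (e, M) hEm
        dsimp only at hle
        have n1 : (σ c : ℕ) ≤ (σ e : ℕ) := m1
        have n2 : (σ f : ℕ) ≤ (σ d : ℕ) := m4
        have n3 : (σ f : ℕ) = (σ M : ℕ) := congrArg Fin.val hfM
        have n4 : (σ e : ℕ) < (σ m : ℕ) := m2
        have n5 : (σ m : ℕ) < (σ M : ℕ) := hmM
        have n6 : ¬((σ e : ℕ) = (σ c : ℕ) ∧ (σ f : ℕ) = (σ d : ℕ)) := by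
          intro hh; exact m5 ⟨Fin.ext hh.1, Fin.ext hh.2⟩
        omega
      · have hEm : (e, f) ∈ E := (hEmem _).mpr ⟨hef, m2.le, hfM.le,
          fun he => absurd he.1 (ne_of_lt m2)⟩
        have hle := hminE (e, f) hEm
        dsimp only at hle
        have n1 : (σ c : ℕ) ≤ (σ e : ℕ) := m1
        have n2 : (σ f : ℕ) ≤ (σ d : ℕ) := m4
        have n4 : (σ e : ℕ) < (σ m : ℕ) := m2
        have n5 : (σ m : ℕ) < (σ f : ℕ) := m3
        have n6 : ¬((σ e : ℕ) = (σ c : ℕ) ∧ (σ f : ℕ) = (σ d : ℕ)) := by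
          intro hh; exact m5 ⟨Fin.ext hh.1, Fin.ext hh.2⟩
        omega
    · have : c = m := σ.injective hcm'
      exact this ▸ hcF'
  -- M ∈ F'
  have hMF' : M ∈ F' := by
    rcases lt_or_eq_of_le hMd with hMd' | hMd'
    · refine (hmem' M).mpr (Or.inr (Or.inr ⟨lt_of_le_of_lt hcm hmM, hMd', ?_⟩))
      rintro ⟨e, f, hef, m1, m2, m3, m4, m5⟩
      rcases lt_trichotomy (σ m) (σ e) with hme | hme | hme
      · exact cross hσ hmM' hef hme m2 m3
      · have hme' : e = m := σ.injective hme.symm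
        have hEm : (m, f) ∈ E := (hEmem _).mpr ⟨hme' ▸ hef, le_rfl, m3.le,
          fun he => absurd he.2 (ne_of_gt m3)⟩
        have hle := hminE (m, f) hEm
        dsimp only at hle
        have n1 : (σ c : ℕ) ≤ (σ e : ℕ) := m1
        have n2 : (σ f : ℕ) ≤ (σ d : ℕ) := m4
        have n3 : (σ e : ℕ) = (σ m : ℕ) := (congrArg Fin.val hme).symm
        have n4 : (σ M : ℕ) < (σ f : ℕ) := m3
        have n5 : (σ m : ℕ) < (σ M : ℕ) := hmM
        have n6 : ¬((σ e : ℕ) = (σ c : ℕ) ∧ (σ f : ℕ) = (σ d : ℕ)) := by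
          intro hh; exact m5 ⟨Fin.ext hh.1, Fin.ext hh.2⟩
        omega
      · have hEm : (e, f) ∈ E := (hEmem _).mpr ⟨hef, hme.le, m3.le,
          fun he => absurd he.2 (ne_of_gt m3)⟩
        have hle := hminE (e, f) hEm
        dsimp only at hle
        have n1 : (σ c : ℕ) ≤ (σ e : ℕ) := m1
        have n2 : (σ f : ℕ) ≤ (σ d : ℕ) := m4
        have n4 : (σ e : ℕ) < (σ m : ℕ) := hme
        have n5 : (σ m : ℕ) < (σ f : ℕ) := lt_trans hmM m3
        have n6 : ¬((σ e : ℕ) = (σ c : ℕ) ∧ (σ f : ℕ) = (σ d : ℕ)) := by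
          intro hh; exact m5 ⟨Fin.ext hh.1, Fin.ext hh.2⟩
        omega
    · have : d = M := σ.injective hMd'.symm
      exact this ▸ hdF'
  -- F' ≠ F
  have hne : F' ≠ F := by
    intro hFF
    rcases lt_or_eq_of_le hcm with h | h
    · have : c ∈ F := hFF ▸ hcF'
      exact absurd (hbd c this).1 (not_le.mpr h)
    · rcases lt_or_eq_of_le hMd with h' | h'
      · have : d ∈ F := hFF ▸ hdF'
        exact absurd (hbd d this).2 (not_le.mpr h')
      · exact hprop ⟨h, h'.symm⟩
  refine ⟨F', hF', hne, hmF', hMF', hmM', c, d, hcF', hdF', hcm, hMd, ?_⟩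
  have n1 : (σ c : ℕ) ≤ (σ m : ℕ) := hcm
  have n2 : (σ M : ℕ) ≤ (σ d : ℕ) := hMd
  have n3 : (σ m : ℕ) < (σ M : ℕ) := hmM
  have n6 : ¬((σ c : ℕ) = (σ m : ℕ) ∧ (σ d : ℕ) = (σ M : ℕ)) := by
    intro hh; exact hprop ⟨Fin.ext hh.1, Fin.ext hh.2⟩
  omega

noncomputable def lenOf (σ : V ≃ Fin (Fintype.card V)) (F : Finset V) : ℕ :=
  F.sup (fun t => (σ t : ℕ)) -
    (Fintype.card V - 1 - F.sup (fun t => Fintype.card V - 1 - (σ t : ℕ)))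

lemma lenOf_eq {F : Finset V} {m M : V} (hm : m ∈ F) (hM : M ∈ F)
    (hbd : ∀ t ∈ F, σ m ≤ σ t ∧ σ t ≤ σ M) : lenOf σ F = (σ M : ℕ) - (σ m : ℕ) := by
  have h1 : F.sup (fun t => (σ t : ℕ)) = (σ M : ℕ) :=
    le_antisymm (Finset.sup_le fun t ht => (hbd t ht).2) (Finset.le_sup (f := fun t => ((σ t : ℕ))) hM)
  have h2 : F.sup (fun t => Fintype.card V - 1 - (σ t : ℕ)) =
      Fintype.card V - 1 - (σ m : ℕ) :=
    le_antisymm (Finset.sup_le fun t ht => Nat.sub_le_sub_left ((hbd t ht).1) _)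
      (Finset.le_sup (f := fun t => Fintype.card V - 1 - (σ t : ℕ)) hm)
  rw [lenOf, h1, h2]
  have h3 : (σ m : ℕ) < Fintype.card V := (σ m).isLt
  have h4 : (σ M : ℕ) < Fintype.card V := (σ M).isLt
  omega

lemma pair_cases (hσ : IsOuterplanarEmbedding G σ) {F F' : Finset V}
    (hF : IsFace G σ F) (hF' : IsFace G σ F') (hne : F ≠ F') {x y : V}
    (hxy : G.Adj x y) (hlt : σ x < σ y)
    (hx : x ∈ F) (hy : y ∈ F) (hx' : x ∈ F') (hy' : y ∈ F') :
    ((∀ t ∈ F, σ x ≤ σ t ∧ σ t ≤ σ y) ∧ (∀ t ∈ F', ¬(σ x < σ t ∧ σ t < σ y))) ∨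
    ((∀ t ∈ F', σ x ≤ σ t ∧ σ t ≤ σ y) ∧ (∀ t ∈ F, ¬(σ x < σ t ∧ σ t < σ y))) := by
  rcases face_adj_cases hF hx hy hxy hlt with h1 | h1 <;>
    rcases face_adj_cases hF' hx' hy' hxy hlt with h2 | h2
  · exact absurd (lin_unique hσ hF hF' hlt hx hy hx' hy' h1 h2) hne
  · exact Or.inr ⟨fun t ht => ⟨h2.1 t ht, h2.2 t ht⟩, h1⟩
  · exact Or.inl ⟨fun t ht => ⟨h1.1 t ht, h1.2 t ht⟩, h2⟩
  · exact absurd (base_unique hσ hF hF' hx hy hx' hy'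
      (fun t ht => ⟨h1.1 t ht, h1.2 t ht⟩) (fun t ht => ⟨h2.1 t ht, h2.2 t ht⟩)) hne

lemma base_lin_len (hσ : IsOuterplanarEmbedding G σ) {F F' : Finset V}
    (hF : IsFace G σ F) (hF' : IsFace G σ F') {x y : V} (hlt : σ x < σ y)
    (hx : x ∈ F) (hy : y ∈ F) (hx' : x ∈ F') (hy' : y ∈ F')
    (hbase : ∀ t ∈ F', σ x ≤ σ t ∧ σ t ≤ σ y)
    (hlin : ∀ t ∈ F, ¬(σ x < σ t ∧ σ t < σ y)) :
    lenOf σ F' < lenOf σ F := by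
  obtain ⟨m, M, hm, hM, hmM, hbd⟩ := face_extremes hF
  have h1 := lenOf_eq hm hM hbd
  have h2 := lenOf_eq hx' hy' hbase
  have hb1 : (σ m : ℕ) ≤ (σ x : ℕ) := (hbd x hx).1
  have hb2 : (σ y : ℕ) ≤ (σ M : ℕ) := (hbd y hy).2
  have hb3 : (σ x : ℕ) < (σ y : ℕ) := hlt
  have hkey : ¬((σ m : ℕ) = (σ x : ℕ) ∧ (σ M : ℕ) = (σ y : ℕ)) := by
    rintro ⟨e1, e2⟩
    have hmx : m = x := σ.injective (Fin.ext e1)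
    have hMy : M = y := σ.injective (Fin.ext e2)
    exact third_between hF hx hy
      (fun t ht => ⟨by rw [← hmx]; exact (hbd t ht).1, by rw [← hMy]; exact (hbd t ht).2⟩)
      hlin
  rw [h1, h2]
  omega

/-- For a dual edge, the shared pair is the base of exactly one of the two faces;
the other face is strictly longer, and the pair is linear in it. -/
lemma dual_adj_struct (hσ : IsOuterplanarEmbedding G σ) {F F' : {F : Finset V // IsFace G σ F}}
    (h : (weakDual G σ).Adj F F') :
    ∃ x y, G.Adj x y ∧ σ x < σ y ∧ x ∈ F.1 ∧ y ∈ F.1 ∧ x ∈ F'.1 ∧ y ∈ F'.1 ∧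
      (((∀ t ∈ F.1, σ x ≤ σ t ∧ σ t ≤ σ y) ∧ (∀ t ∈ F'.1, ¬(σ x < σ t ∧ σ t < σ y)) ∧
          lenOf σ F.1 < lenOf σ F'.1) ∨
       ((∀ t ∈ F'.1, σ x ≤ σ t ∧ σ t ≤ σ y) ∧ (∀ t ∈ F.1, ¬(σ x < σ t ∧ σ t < σ y)) ∧
          lenOf σ F'.1 < lenOf σ F.1)) := by
  obtain ⟨hne, u, v, huv, m1, m2, m3, m4⟩ := h
  have hne' : F.1 ≠ F'.1 := fun hh => hne (Subtype.ext hh)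
  rcases lt_trichotomy (σ u) (σ v) with hlt | hlt | hlt
  · rcases pair_cases hσ F.2 F'.2 hne' huv hlt m1 m3 m2 m4 with ⟨hb, hl⟩ | ⟨hb, hl⟩
    · exact ⟨u, v, huv, hlt, m1, m3, m2, m4, Or.inl ⟨hb, hl,
        base_lin_len hσ F'.2 F.2 hlt m2 m4 m1 m3 hb hl⟩⟩
    · exact ⟨u, v, huv, hlt, m1, m3, m2, m4, Or.inr ⟨hb, hl,
        base_lin_len hσ F.2 F'.2 hlt m1 m3 m2 m4 hb hl⟩⟩
  · exact absurd huv (by rw [σ.injective hlt]; exact G.loopless.irrefl v)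
  · rcases pair_cases hσ F.2 F'.2 hne' huv.symm hlt m3 m1 m4 m2 with ⟨hb, hl⟩ | ⟨hb, hl⟩
    · exact ⟨v, u, huv.symm, hlt, m3, m1, m4, m2, Or.inl ⟨hb, hl,
        base_lin_len hσ F'.2 F.2 hlt m4 m2 m3 m1 hb hl⟩⟩
    · exact ⟨v, u, huv.symm, hlt, m3, m1, m4, m2, Or.inr ⟨hb, hl,
        base_lin_len hσ F.2 F'.2 hlt m3 m1 m4 m2 hb hl⟩⟩

lemma adj_len_ne (hσ : IsOuterplanarEmbedding G σ) {F F' : {F : Finset V // IsFace G σ F}}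
    (h : (weakDual G σ).Adj F F') : lenOf σ F.1 ≠ lenOf σ F'.1 := by
  obtain ⟨x, y, -, -, -, -, -, -, hc | hc⟩ := dual_adj_struct hσ h
  · exact ne_of_lt hc.2.2
  · exact ne_of_gt hc.2.2

lemma bigger_unique (hσ : IsOuterplanarEmbedding G σ)
    {F A B : {F : Finset V // IsFace G σ F}}
    (hFA : (weakDual G σ).Adj F A) (hFB : (weakDual G σ).Adj F B)
    (hA : lenOf σ F.1 < lenOf σ A.1) (hB : lenOf σ F.1 < lenOf σ B.1) : A = B := by
  obtain ⟨x, y, hxy, hlt, hxF, hyF, hxA, hyA, hc⟩ := dual_adj_struct hσ hFA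
  have hc1 : (∀ t ∈ F.1, σ x ≤ σ t ∧ σ t ≤ σ y) ∧ (∀ t ∈ A.1, ¬(σ x < σ t ∧ σ t < σ y)) := by
    rcases hc with h | h
    · exact ⟨h.1, h.2.1⟩
    · exact absurd hA (not_lt.mpr h.2.2.le)
  obtain ⟨x', y', hxy', hlt', hxF', hyF', hxB, hyB, hc'⟩ := dual_adj_struct hσ hFB
  have hc2 : (∀ t ∈ F.1, σ x' ≤ σ t ∧ σ t ≤ σ y') ∧
      (∀ t ∈ B.1, ¬(σ x' < σ t ∧ σ t < σ y')) := by
    rcases hc' with h | h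
    · exact ⟨h.1, h.2.1⟩
    · exact absurd hB (not_lt.mpr h.2.2.le)
  have hxx : x = x' := σ.injective (le_antisymm ((hc1.1 x' hxF').1) ((hc2.1 x hxF).1))
  have hyy : y = y' := σ.injective (le_antisymm ((hc2.1 y hyF).2) ((hc1.1 y' hyF').2))
  subst hxx; subst hyy
  exact Subtype.ext (lin_unique hσ A.2 B.2 hlt hxA hyA hxB hyB hc1.2 hc2.2)

theorem weakDual_isTree' (hσ : IsOuterplanarEmbedding G σ) (hcard : 3 ≤ Fintype.card V)
    (hconn : G.Connected) (h2c : ∀ v : V, (G.induce {w : V | w ≠ v}).Connected) :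
    (weakDual G σ).IsTree := by
  classical
  have hn0 : 0 < Fintype.card V := by omega
  set u₀ : V := σ.symm ⟨0, hn0⟩ with hu₀def
  set ut : V := σ.symm ⟨Fintype.card V - 1, by omega⟩ with hutdef
  have h0 : (σ u₀ : ℕ) = 0 := by rw [hu₀def, Equiv.apply_symm_apply]
  have h1 : (σ ut : ℕ) = Fintype.card V - 1 := by rw [hutdef, Equiv.apply_symm_apply]
  have hadj0 : G.Adj u₀ ut := hamWrap hσ hconn h2c hcard h0 h1
  have hlt0 : σ u₀ < σ ut := by rw [Fin.lt_def, h0, h1]; omega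
  have hint0 : ∃ w, σ u₀ < σ w ∧ σ w < σ ut := by
    have h1n : (1 : ℕ) < Fintype.card V := by omega
    refine ⟨σ.symm ⟨1, h1n⟩, ?_, ?_⟩
    · rw [Fin.lt_def, h0, Equiv.apply_symm_apply]
      exact Nat.zero_lt_one
    · rw [Fin.lt_def, Equiv.apply_symm_apply, h1]
      show (1 : ℕ) < Fintype.card V - 1
      omega
  obtain ⟨F₀, hF₀, hmem₀⟩ := face_exists hσ hconn h2c hadj0 hlt0 hint0
  have hu₀F₀ : u₀ ∈ F₀ := (hmem₀ u₀).mpr (Or.inl rfl)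
  have hutF₀ : ut ∈ F₀ := (hmem₀ ut).mpr (Or.inr (Or.inl rfl))
  have hbd₀ : ∀ t ∈ F₀, σ u₀ ≤ σ t ∧ σ t ≤ σ ut := by
    intro t ht
    constructor
    · rw [Fin.le_def, h0]; omega
    · rw [Fin.le_def, h1]; have := (σ t).isLt; omega
  have root_eq : ∀ (F : {F : Finset V // IsFace G σ F}) (m M : V), m ∈ F.1 → M ∈ F.1 →
      (∀ t ∈ F.1, σ m ≤ σ t ∧ σ t ≤ σ M) → (σ m : ℕ) = 0 →
      (σ M : ℕ) = Fintype.card V - 1 → F = ⟨F₀, hF₀⟩ := by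
    intro F m M hm hM hbd e0 e1
    have hm' : m = u₀ := σ.injective (Fin.ext (by rw [e0, h0]))
    have hM' : M = ut := σ.injective (Fin.ext (by rw [e1, h1]))
    subst hm'; subst hM'
    exact Subtype.ext (base_unique hσ F.2 hF₀ hm hM hu₀F₀ hutF₀ hbd hbd₀)
  have reach : ∀ k (F : {F : Finset V // IsFace G σ F}),
      Fintype.card V - 1 - lenOf σ F.1 ≤ k → (weakDual G σ).Reachable F ⟨F₀, hF₀⟩ := by
    intro k
    induction k with
    | zero =>
      intro F hk
      obtain ⟨m, M, hm, hM, hmM, hbd⟩ := face_extremes F.2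
      have hlen := lenOf_eq hm hM hbd
      have e1' : (σ M : ℕ) < Fintype.card V := (σ M).isLt
      have hmMn : (σ m : ℕ) < (σ M : ℕ) := hmM
      have e0 : (σ m : ℕ) = 0 ∧ (σ M : ℕ) = Fintype.card V - 1 := by omega
      rw [root_eq F m M hm hM hbd e0.1 e0.2]
    | succ k ih =>
      intro F hk
      obtain ⟨m, M, hm, hM, hmM, hbd⟩ := face_extremes F.2
      by_cases hr : (σ m : ℕ) = 0 ∧ (σ M : ℕ) = Fintype.card V - 1
      · rw [root_eq F m M hm hM hbd hr.1 hr.2]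
      · obtain ⟨F', hF', hneF, hmF', hMF', hadjmM, c, d, hcF', hdF', hcm, hMd, hlal⟩ :=
          parent_exists hσ hconn h2c hcard F.2 hm hM hbd hmM hr
        have hdadj : (weakDual G σ).Adj F ⟨F', hF'⟩ :=
          ⟨fun h => hneF (congrArg Subtype.val h).symm, m, M, hadjmM, hm, hmF', hM, hMF'⟩
        obtain ⟨m', M', hm', hM', hmM', hbd'⟩ := face_extremes hF'
        have hlen' := lenOf_eq hm' hM' hbd'
        have hlenF := lenOf_eq hm hM hbd
        refine (hdadj.reachable).trans (ih ⟨F', hF'⟩ ?_)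
        have g1 : (σ m' : ℕ) ≤ (σ c : ℕ) := (hbd' c hcF').1
        have g2 : (σ d : ℕ) ≤ (σ M' : ℕ) := (hbd' d hdF').2
        have g3 : (σ c : ℕ) ≤ (σ m : ℕ) := hcm
        have g4 : (σ M : ℕ) ≤ (σ d : ℕ) := hMd
        rw [hlenF] at hk
        rw [hlen']
        omega
  rw [isTree_iff]
  constructor
  · rw [connected_iff]
    exact ⟨fun A B => (reach _ A le_rfl).trans (reach _ B le_rfl).symm, ⟨⟨F₀, hF₀⟩⟩⟩
  · intro X c hc
    have hXs : X ∈ c.support := SimpleGraph.Walk.start_mem_support c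
    obtain ⟨Fm, hFmmem, hFmin⟩ := (c.support.toFinset).exists_min_image
      (fun Y => lenOf σ Y.1) ⟨X, List.mem_toFinset.mpr hXs⟩
    have hFm' : Fm ∈ c.support := List.mem_toFinset.mp hFmmem
    have hc' : (c.rotate Fm hFm').IsCycle := hc.rotate hFm'
    have hsupp : ∀ z, z ∈ (c.rotate Fm hFm').support → z ∈ c.support := by
      intro z hz
      rcases (SimpleGraph.Walk.mem_support_iff _).mp hz with rfl | hz'
      · exact hFm'
      · exact List.mem_of_mem_tail
          (((SimpleGraph.Walk.support_rotate c Fm hFm').mem_iff).mp hz')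
    cases hCC : c.rotate Fm hFm' with
    | nil =>
      have h3 := hc'.three_le_length
      rw [hCC] at h3
      simp at h3
    | @cons _ A _ hFA p =>
      cases hPR : p.reverse with
      | nil =>
        exact (weakDual G σ).loopless.irrefl _ hFA
      | @cons _ B _ hFB q =>
        have hp : p = (SimpleGraph.Walk.cons hFB q).reverse := by
          rw [← hPR, SimpleGraph.Walk.reverse_reverse]
        have hAmem : A ∈ c.support := hsupp A (by
          rw [hCC]
          simp [SimpleGraph.Walk.support_cons, SimpleGraph.Walk.start_mem_support])
        have hBmem : B ∈ c.support := hsupp B (by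
          rw [hCC, hp]
          simp [SimpleGraph.Walk.support_cons, SimpleGraph.Walk.support_reverse,
            SimpleGraph.Walk.start_mem_support])
        have hlFA : lenOf σ Fm.1 < lenOf σ A.1 :=
          lt_of_le_of_ne (hFmin A (List.mem_toFinset.mpr hAmem)) (adj_len_ne hσ hFA)
        have hlFB : lenOf σ Fm.1 < lenOf σ B.1 :=
          lt_of_le_of_ne (hFmin B (List.mem_toFinset.mpr hBmem)) (adj_len_ne hσ hFB)
        have hAB : A = B := bigger_unique hσ hFA hFB hlFA hlFB
        subst hAB
        have hnd := hc'.edges_nodup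
        rw [hCC, hp] at hnd
        simp only [SimpleGraph.Walk.edges_cons, SimpleGraph.Walk.edges_reverse,
          List.reverse_cons] at hnd
        rcases List.nodup_cons.mp hnd with ⟨hni, -⟩
        exact hni (List.mem_append.mpr (Or.inr (by simp)))

end WD
end WDProof

/-- The weak dual of a 2-connected outerplanar graph (with respect to
any outerplanar embedding) is a tree. -/
theorem weakDual_isTree {V : Type*} [Fintype V] (G : SimpleGraph V)
    (h2 : IsTwoConnected G) (σ : V ≃ Fin (Fintype.card V))
    (hσ : IsOuterplanarEmbedding G σ) : (weakDual G σ).IsTree :=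
  WD.weakDual_isTree' hσ h2.1 h2.2.1 h2.2.2
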